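/- In the syndrome-graph decoding setting: if at least N-T of the received vectors ȳ₁,...,ȳ_N are unaltered (ȳ_i = y_i), where y = A x for a matrix A with all (N-T)×(N-T) submatrices nonsingular, and the syndrome graph (edge between i and j, allowing i = j, iff ⟨ȳ_i, ȳ_j⟩ = ⟨y_i, y_j⟩) is formed, then every vertex i ∈ V* (the set of vertices with self-loops contained in an (N-T)-clique and joined to all such vertices) satisfies ȳ_i = y_i. -/

import Mathlib

open scoped RealInnerProductSpace

/-- In the syndrome-graph decoding setting, with y = A x for A
having all (N-T)×(N-T) submatrices nonsingular, and at least N-T received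
vectors unaltered, every vertex in V* has its received vector unaltered. -/
theorem stmt_11 (N T N₀ : ℕ) (hTN : T ≤ N)
    (A : Matrix (Fin N) (Fin (N - T)) ℝ)
    (hA : ∀ e : Fin (N - T) → Fin N, Function.Injective e →
      (Matrix.of fun i j : Fin (N - T) => A (e i) j).det ≠ 0)
    (x : Fin (N - T) → EuclideanSpace ℝ (Fin N₀))
    (y ybar : Fin N → EuclideanSpace ℝ (Fin N₀))
    (hy : ∀ i, y i = ∑ j, A i j • x j)
    (hunalt : ∃ U : Finset (Fin N), N - T ≤ U.card ∧ ∀ i ∈ U, ybar i = y i)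
    -- syndrome graph: Edge i j (allowing i = j) iff inner products agree
    (Edge : Fin N → Fin N → Prop)
    (hEdge : ∀ i j, Edge i j ↔ ⟪ybar i, ybar j⟫ = ⟪y i, y j⟫)
    -- V': vertices with self-loops contained in a clique of size ≥ N-T
    (V' : Set (Fin N))
    (hV' : V' = {i : Fin N | ∃ s : Finset (Fin N),
      (∀ a ∈ s, ∀ b ∈ s, Edge a b) ∧ N - T ≤ s.card ∧ i ∈ s})
    -- V*: vertices of V' joined (with self-loop) to all of V'
    (Vstar : Set (Fin N))
    (hVstar : Vstar = {i ∈ V' | Edge i i ∧ ∀ j ∈ V', Edge i j}) :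
    ∀ i ∈ Vstar, ybar i = y i := by
  obtain ⟨U, hUcard, hU⟩ := hunalt
  intro i hi
  rw [hVstar] at hi
  obtain ⟨hiV', hii, hall⟩ := hi
  -- U ⊆ V'
  have hUclique : ∀ a ∈ U, ∀ b ∈ U, Edge a b := by
    intro a ha b hb
    rw [hEdge, hU a ha, hU b hb]
  have hUV' : ∀ j ∈ U, j ∈ V' := by
    intro j hj
    rw [hV']
    exact ⟨U, hUclique, hUcard, hj⟩
  -- i is joined to all of U
  have hinner : ∀ j ∈ U, ⟪ybar i, y j⟫ = ⟪y i, y j⟫ := by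
    intro j hj
    have := (hEdge i j).mp (hall j (hUV' j hj))
    rwa [hU j hj] at this
  -- pick N - T elements of U
  obtain ⟨t, htU, htcard⟩ := Finset.exists_subset_card_eq hUcard
  let e : Fin (N - T) → Fin N := fun m => (t.equivFin.symm (Fin.cast htcard.symm m) : Fin N)
  have heinj : Function.Injective e := by
    intro a b hab
    have := t.equivFin.symm.injective (Subtype.ext hab)
    simpa [Fin.ext_iff] using congrArg Fin.val this
  have heU : ∀ m, e m ∈ U := fun m => htU (t.equivFin.symm (Fin.cast htcard.symm m)).2
  set B : Matrix (Fin (N - T)) (Fin (N - T)) ℝ :=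
    Matrix.of fun m k => A (e m) k with hB
  have hBdet : B.det ≠ 0 := hA e heinj
  have hBunit : IsUnit B := by
    rw [Matrix.isUnit_iff_isUnit_det]
    exact isUnit_iff_ne_zero.mpr hBdet
  -- scalar system
  set f : Fin (N - T) → ℝ := fun k => ⟪ybar i, x k⟫ - ⟪y i, x k⟫ with hf
  have hmv : B.mulVec f = 0 := by
    funext m
    have h1 : ⟪ybar i, y (e m)⟫ = ∑ k, A (e m) k * ⟪ybar i, x k⟫ := by
      rw [hy (e m), inner_sum]
      exact Finset.sum_congr rfl fun k _ => real_inner_smul_right _ _ _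
    have h2 : ⟪y i, y (e m)⟫ = ∑ k, A (e m) k * ⟪y i, x k⟫ := by
      rw [hy (e m), inner_sum]
      exact Finset.sum_congr rfl fun k _ => real_inner_smul_right _ _ _
    have h3 := hinner (e m) (heU m)
    simp only [Matrix.mulVec, dotProduct, hB, hf, Pi.zero_apply, Matrix.of_apply,
      mul_sub]
    rw [Finset.sum_sub_distrib, ← h1, ← h2, h3, sub_self]
  have hf0 : f = 0 := by
    have hinj := Matrix.mulVec_injective_iff_isUnit.mpr hBunit
    have h0 : B.mulVec f = B.mulVec 0 := by rw [hmv, Matrix.mulVec_zero]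
    exact hinj h0
  have hxk : ∀ k, ⟪ybar i, x k⟫ = ⟪y i, x k⟫ := by
    intro k
    have := congrFun hf0 k
    simp only [hf, Pi.zero_apply, sub_eq_zero] at this
    exact this
  have horth : ⟪ybar i - y i, y i⟫ = (0 : ℝ) := by
    nth_rewrite 2 [hy i]
    rw [inner_sum]
    refine Finset.sum_eq_zero fun k _ => ?_
    rw [real_inner_smul_right, inner_sub_left, hxk k, sub_self, mul_zero]
  have hyi : ⟪ybar i, y i⟫ = ⟪y i, y i⟫ := by
    have := horth
    rw [inner_sub_left, sub_eq_zero] at this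
    exact this
  have hself : ⟪ybar i, ybar i⟫ = ⟪y i, y i⟫ := (hEdge i i).mp hii
  have hzero : ⟪ybar i - y i, ybar i - y i⟫ = (0:ℝ) := by
    have hcomm : ⟪y i, ybar i⟫ = ⟪y i, y i⟫ := by
      rw [real_inner_comm]; exact hyi
    rw [inner_sub_left, inner_sub_right, inner_sub_right, hself, hyi, hcomm]
    ring
  have := inner_self_eq_zero.mp hzero
  exact sub_eq_zero.mp this
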